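/- A universal graph for the family of all $n$-vertex planar graphs must have at least $\Omega(n \log n)$ edges. More precisely, if $G$ is a graph containing, for every $t \in \{1, \ldots, n\}$, the forest consisting of $t$ disjoint copies of the star $K_{1, \lfloor n/t \rfloor - 1}$ as a subgraph, then the non-increasing degree sequence of $G$ dominates the sequence $(n-1, \lfloor n/2 \rfloor - 1, \lfloor n/3 \rfloor - 1, \ldots)$ termwise, and hence $G$ has at least $\frac{1}{2}\sum_{t=1}^{n}(\lfloor n/t \rfloor - 1)$ edges. -/

import Mathlib

/-- `H` is isomorphic to a (not necessarily induced) subgraph of `G`. -/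
def CopyIn {γ δ : Type*} (H : SimpleGraph γ) (G : SimpleGraph δ) : Prop :=
  ∃ f : γ → δ, Function.Injective f ∧ ∀ a b, H.Adj a b → G.Adj (f a) (f b)

/-- The forest consisting of `t` disjoint copies of the star `K_{1,m-1}`:
in each copy `i : Fin t`, the hub is the vertex with second coordinate `0`
and the leaves are the remaining `m - 1` vertices. -/
def starForest (t m : ℕ) : SimpleGraph (Fin t × Fin m) where
  Adj u v := u.1 = v.1 ∧ ((u.2.val = 0 ∧ v.2.val ≠ 0) ∨ (u.2.val ≠ 0 ∧ v.2.val = 0))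
  symm := ⟨by rintro u v ⟨h1, h2⟩; exact ⟨h1.symm, by tauto⟩⟩
  loopless := ⟨by rintro u ⟨-, h⟩; rcases h with ⟨h1, h2⟩ | ⟨h1, h2⟩ <;> exact absurd h2 (by tauto)⟩

/-- If a graph `G` contains, for every `t ∈ {1, …, n}`, the forest of `t` disjoint
copies of the star `K_{1, ⌊n/t⌋ - 1}`, then for every `t` there are `t` vertices of
degree at least `⌊n/t⌋ - 1` (i.e. the sorted degree sequence dominates
`(n-1, ⌊n/2⌋-1, …)`), and hence `G` has at least `½ ∑_{t=1}^n (⌊n/t⌋ - 1)` edges. -/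
theorem stmt4 {V : Type*} [Fintype V] [DecidableEq V] (n : ℕ)
    (G : SimpleGraph V) [DecidableRel G.Adj]
    (hstars : ∀ t, 1 ≤ t → t ≤ n → CopyIn (starForest t (n / t)) G) :
    (∀ t ∈ Finset.Icc 1 n, ∃ s : Finset V, s.card = t ∧
        ∀ v ∈ s, n / t - 1 ≤ G.degree v) ∧
      ∑ t ∈ Finset.Icc 1 n, (n / t - 1) ≤ 2 * G.edgeFinset.card := by
  classical
  have key : ∀ t ∈ Finset.Icc 1 n, ∃ s : Finset V, s.card = t ∧
      ∀ v ∈ s, n / t - 1 ≤ G.degree v := by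
    intro t ht
    rw [Finset.mem_Icc] at ht
    obtain ⟨f, hfinj, hfadj⟩ := hstars t ht.1 ht.2
    have hm : 0 < n / t := Nat.div_pos ht.2 (lt_of_lt_of_le Nat.zero_lt_one ht.1)
    refine ⟨Finset.image (fun i : Fin t => f (i, ⟨0, hm⟩)) Finset.univ, ?_, ?_⟩
    · rw [Finset.card_image_of_injective _ (fun i j hij => by
        have := hfinj hij
        exact ((Prod.mk.injEq ..).mp this).1), Finset.card_univ, Fintype.card_fin]
    · intro v hv
      simp only [Finset.mem_image, Finset.mem_univ, true_and] at hv
      obtain ⟨i, rfl⟩ := hv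
      have hsub : Finset.image (fun j : Fin (n/t) => f (i, j))
          (Finset.univ.filter (fun j : Fin (n/t) => j.val ≠ 0)) ⊆
          G.neighborFinset (f (i, ⟨0, hm⟩)) := by
        intro x hx
        simp only [Finset.mem_image, Finset.mem_filter, Finset.mem_univ, true_and] at hx
        obtain ⟨j, hj, rfl⟩ := hx
        rw [SimpleGraph.mem_neighborFinset]
        exact hfadj _ _ ⟨rfl, Or.inl ⟨rfl, hj⟩⟩
      have hcard := Finset.card_le_card hsub
      rw [Finset.card_image_of_injective _ (fun a b hab => by
          have := hfinj hab
          exact ((Prod.mk.injEq ..).mp this).2)] at hcard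
      have hfilt : (Finset.univ.filter (fun j : Fin (n/t) => j.val ≠ 0)) =
          Finset.univ.erase ⟨0, hm⟩ := by
        ext j
        simp [Finset.mem_erase, Fin.ext_iff]
      rw [hfilt, Finset.card_erase_of_mem (Finset.mem_univ _), Finset.card_univ,
        Fintype.card_fin] at hcard
      exact le_trans hcard (le_of_eq rfl)
  refine ⟨key, ?_⟩
  rw [← SimpleGraph.sum_degrees_eq_twice_card_edges]
  -- rewrite each n/t - 1 as a count over range n
  have hfilt_range : ∀ a : ℕ, ((Finset.range n).filter (fun k => k < a)).card = min a n := by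
    intro a
    have : (Finset.range n).filter (fun k => k < a) = Finset.range (min a n) := by
      ext k; simp [Finset.mem_range]; omega
    rw [this, Finset.card_range]
  have hL : ∑ t ∈ Finset.Icc 1 n, (n / t - 1) =
      ∑ k ∈ Finset.range n, ((Finset.Icc 1 n).filter (fun t => k < n / t - 1)).card := by
    have : ∀ t ∈ Finset.Icc 1 n, (n / t - 1) =
        ((Finset.range n).filter (fun k => k < n / t - 1)).card := by
      intro t ht
      rw [Finset.mem_Icc] at ht
      rw [hfilt_range]
      have : n / t ≤ n := Nat.div_le_self n t
      omega
    rw [Finset.sum_congr rfl this]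
    simp only [Finset.card_filter]
    rw [Finset.sum_comm]
  have hR : ∑ k ∈ Finset.range n, (Finset.univ.filter (fun v : V => k < G.degree v)).card ≤
      ∑ v : V, G.degree v := by
    calc ∑ k ∈ Finset.range n, (Finset.univ.filter (fun v : V => k < G.degree v)).card
        = ∑ v : V, ((Finset.range n).filter (fun k => k < G.degree v)).card := by
          simp only [Finset.card_filter]
          rw [Finset.sum_comm]
      _ ≤ ∑ v : V, G.degree v := by
          apply Finset.sum_le_sum
          intro v _
          rw [hfilt_range]
          exact min_le_left _ _
  rw [hL]
  refine le_trans (Finset.sum_le_sum ?_) hR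
  intro k _
  set T := (Finset.Icc 1 n).filter (fun t => k < n / t - 1) with hT
  rcases T.eq_empty_or_nonempty with hTe | hTne
  · simp [hTe]
  · set t₀ := T.max' hTne with ht₀
    have ht₀T : t₀ ∈ T := T.max'_mem hTne
    rw [hT, Finset.mem_filter, Finset.mem_Icc] at ht₀T
    have hTcard : T.card ≤ t₀ := by
      have : T ⊆ Finset.Icc 1 t₀ := by
        intro t htT
        have h1 : t ∈ Finset.Icc 1 n := (Finset.mem_filter.mp htT).1
        rw [Finset.mem_Icc] at h1
        exact Finset.mem_Icc.mpr ⟨h1.1, T.le_max' t htT⟩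
      calc T.card ≤ (Finset.Icc 1 t₀).card := Finset.card_le_card this
        _ = t₀ := by rw [Nat.card_Icc]; omega
    obtain ⟨s, hscard, hsdeg⟩ := key t₀ (Finset.mem_Icc.mpr ⟨ht₀T.1.1, ht₀T.1.2⟩)
    have hssub : s ⊆ Finset.univ.filter (fun v : V => k < G.degree v) := by
      intro v hv
      rw [Finset.mem_filter]
      refine ⟨Finset.mem_univ _, ?_⟩
      have := hsdeg v hv
      have := ht₀T.2
      omega
    calc T.card ≤ t₀ := hTcard
      _ = s.card := hscard.symm
      _ ≤ _ := Finset.card_le_card hssub
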